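/- For every natural number j ≥ 2, the Wilson-type prime indicator F(j) = ⌊cos²(π·((j-1)! + 1)/j)⌋ (with the real cosine, real division, and floor function) equals 1 if j is prime and equals 0 if j is not prime. -/

import Mathlib

open Real

/-- The Wilson-type prime indicator `F(j) = ⌊cos²(π·((j-1)! + 1)/j)⌋`. -/
noncomputable def F (j : ℕ) : ℤ :=
  ⌊(Real.cos (Real.pi * (((Nat.factorial (j - 1) : ℝ) + 1) / (j : ℝ)))) ^ 2⌋

lemma wilson_dvd_iff (j : ℕ) (hj : 2 ≤ j) :
    j ∣ Nat.factorial (j - 1) + 1 ↔ j.Prime := by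
  rw [Nat.prime_iff_fac_equiv_neg_one (by omega), ← ZMod.natCast_eq_zero_iff]
  push_cast
  constructor
  · intro h
    exact eq_neg_of_add_eq_zero_left h
  · intro h
    rw [h]
    ring

/-- For `j ≥ 2`, the indicator `F j` equals 1 if `j` is prime and 0 otherwise. -/
theorem F_eq_one_iff_prime (j : ℕ) (hj : 2 ≤ j) :
    (j.Prime → F j = 1) ∧ (¬ j.Prime → F j = 0) := by
  have hj0 : (0:ℝ) < (j:ℝ) := by positivity
  constructor
  · intro hp
    obtain ⟨k, hk⟩ := (wilson_dvd_iff j hj).mpr hp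
    have hx : ((Nat.factorial (j - 1) : ℝ) + 1) / (j : ℝ) = (k : ℝ) := by
      field_simp
      exact_mod_cast hk
    rw [F, hx]
    have hsin : Real.sin (Real.pi * k) = 0 := by
      rw [mul_comm]; exact Real.sin_nat_mul_pi k
    have := Real.sin_sq_add_cos_sq (Real.pi * k)
    rw [hsin] at this
    have hcos : Real.cos (Real.pi * k) ^ 2 = 1 := by nlinarith
    rw [hcos]; exact Int.floor_one
  · intro hp
    set x : ℝ := ((Nat.factorial (j - 1) : ℝ) + 1) / (j : ℝ) with hxdef
    have hsin : Real.sin (Real.pi * x) ≠ 0 := by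
      intro h
      rw [Real.sin_eq_zero_iff] at h
      obtain ⟨n, hn⟩ := h
      have hpi : Real.pi ≠ 0 := Real.pi_ne_zero
      have hxn : x = (n : ℝ) := by
        have : Real.pi * (n : ℝ) = Real.pi * x := by linarith [hn]
        exact (mul_left_cancel₀ hpi this).symm
      have hx' : (Nat.factorial (j - 1) : ℝ) + 1 = (j : ℝ) * n := by
        have := hxn
        rw [hxdef, div_eq_iff (ne_of_gt hj0)] at this
        linarith [this]
      -- n is positive
      have hnpos : 0 < n := by
        by_contra hn'
        push_neg at hn'
        have : (j : ℝ) * n ≤ 0 := by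
          apply mul_nonpos_of_nonneg_of_nonpos (le_of_lt hj0)
          exact_mod_cast hn'
        have hfac : (0:ℝ) < (Nat.factorial (j-1) : ℝ) + 1 := by positivity
        linarith
      lift n to ℕ using hnpos.le with m
      have hdvd : j ∣ Nat.factorial (j - 1) + 1 := ⟨m, by exact_mod_cast hx'⟩
      exact hp ((wilson_dvd_iff j hj).mp hdvd)
    have h1 : Real.cos (Real.pi * x) ^ 2 < 1 := by
      have := Real.sin_sq_add_cos_sq (Real.pi * x)
      have : Real.sin (Real.pi * x) ^ 2 > 0 := by positivity
      nlinarith [Real.sin_sq_add_cos_sq (Real.pi * x)]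
    have h0 : 0 ≤ Real.cos (Real.pi * x) ^ 2 := sq_nonneg _
    rw [F]
    exact Int.floor_eq_zero_iff.mpr ⟨h0, h1⟩
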